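/- Let G be a finite group, let N ≤ M be subgroups of G, let x ∈ G, and let p be a prime. Write o(x^{o(x,M)}, N) = p^α · v with p not dividing v. Then p^α divides the index [M : N]. -/

import Mathlib

/-- `nOrd S x` is the smallest positive integer `k` such that `x ^ k ∈ S`. -/
noncomputable def nOrd {G : Type*} [Group G] (S : Set G) (x : G) : ℕ :=
  sInf {k : ℕ | 0 < k ∧ x ^ k ∈ S}

/-- `gOrd S x = gcd { nOrd S (g⁻¹ * x * g) : g ∈ G }`, the generalized order of `x`
with respect to `S`. -/
noncomputable def gOrd {G : Type*} [Group G] [Fintype G] (S : Set G) (x : G) : ℕ :=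
  Finset.univ.gcd fun g : G => nOrd S (g⁻¹ * x * g)

open Pointwise

section Helpers

variable {G : Type*} [Group G]

lemma nOrd_spec [Finite G] (N : Subgroup G) (x : G) :
    0 < nOrd (N : Set G) x ∧ x ^ nOrd (N : Set G) x ∈ N := by
  have : orderOf x ∈ {k : ℕ | 0 < k ∧ x ^ k ∈ (N : Set G)} :=
    ⟨orderOf_pos x, by simp [pow_orderOf_eq_one, one_mem]⟩
  exact Nat.sInf_mem ⟨_, this⟩

lemma nOrd_dvd_iff [Finite G] (N : Subgroup G) (x : G) (k : ℕ) :
    nOrd (N : Set G) x ∣ k ↔ x ^ k ∈ N := by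
  obtain ⟨hpos, hmem⟩ := nOrd_spec N x
  set n := nOrd (N : Set G) x with hn
  constructor
  · rintro ⟨j, rfl⟩
    rw [pow_mul]
    exact pow_mem hmem j
  · intro hk
    have hr : x ^ (k % n) ∈ N := by
      have hmem2 : x ^ (n * (k / n)) ∈ N := by rw [pow_mul]; exact pow_mem hmem _
      have h3 : x ^ (n * (k / n)) * x ^ (k % n) = x ^ k := by
        rw [← pow_add, Nat.div_add_mod]
      have := mul_mem (inv_mem hmem2) hk
      rwa [← h3, inv_mul_cancel_left] at this
    rcases Nat.eq_zero_or_pos (k % n) with h0 | h0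
    · exact Nat.dvd_of_mod_eq_zero h0
    · have hle : n ≤ k % n :=
        Nat.sInf_le (show k % n ∈ {j : ℕ | 0 < j ∧ x ^ j ∈ (N : Set G)} from ⟨h0, hr⟩)
      have := Nat.mod_lt k hpos
      omega

lemma relindex_mul_card_inf [Finite G] (N K : Subgroup G) :
    N.relIndex K * Nat.card ↥(N ⊓ K) = Nat.card ↥K := by
  have h1 : Nat.card ↥(N.subgroupOf K) = Nat.card ↥(N ⊓ K) := by
    rw [← Subgroup.inf_subgroupOf_right]
    exact Nat.card_congr (Subgroup.subgroupOfEquivOfLe inf_le_right).toEquiv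
  rw [Subgroup.relIndex, ← h1, Subgroup.index_mul_card]

lemma sylow_step {H : Type*} [Group H] [Finite H] (N : Subgroup H) (p : ℕ) (hp : p.Prime)
    (π : H) (hπ : IsPGroup p (Subgroup.zpowers π)) :
    ∃ g : H, (nOrd (N : Set H) (g⁻¹ * π * g)).factorization p ≤ (N.index).factorization p := by
  haveI : Fact p.Prime := ⟨hp⟩
  obtain ⟨R⟩ : Nonempty (Sylow p ↥N) := inferInstance
  set R' : Subgroup H := (R : Subgroup ↥N).map N.subtype with hR'def
  have hR' : IsPGroup p R' := R.isPGroup'.map _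
  obtain ⟨S, hRS⟩ := hR'.exists_le_sylow
  obtain ⟨S₂, hS₂⟩ := hπ.exists_le_sylow
  obtain ⟨g, hg⟩ := MulAction.exists_smul_eq H S₂ S
  refine ⟨g⁻¹, ?_⟩
  rw [inv_inv]
  set ρ := g * π * g⁻¹ with hρdef
  have hρS : ρ ∈ S := by
    have hmem : ρ ∈ MulAut.conj g • (S₂ : Subgroup H) :=
      Subgroup.smul_mem_pointwise_smul π _ _ (hS₂ (Subgroup.mem_zpowers π))
    rw [← hg]
    exact hmem
  set B := Subgroup.zpowers ρ with hBdef
  have hB : B ≤ S := Subgroup.zpowers_le.mpr hρS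
  set n := nOrd (N : Set H) ρ with hndef
  have hspec := nOrd_spec N ρ
  have hnr : n ∣ orderOf ρ := (nOrd_dvd_iff N ρ _).mpr (by simp [pow_orderOf_eq_one, one_mem])
  -- N ⊓ B = zpowers (ρ ^ n)
  have hNB : N ⊓ B = Subgroup.zpowers (ρ ^ n) := by
    apply le_antisymm
    · rintro y ⟨hyN, hyB⟩
      have hy' : y ∈ Submonoid.powers ρ := mem_powers_iff_mem_zpowers.mpr hyB
      rw [Submonoid.mem_powers_iff] at hy'
      obtain ⟨k, rfl⟩ := hy'
      obtain ⟨j, rfl⟩ := (nOrd_dvd_iff N ρ k).mpr hyN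
      rw [pow_mul]
      exact Subgroup.npow_mem_zpowers _ j
    · rw [Subgroup.zpowers_le]
      exact ⟨hspec.2, Subgroup.npow_mem_zpowers ρ n⟩
  have cardB : Nat.card ↥B = orderOf ρ := Nat.card_zpowers ρ
  have cardNB : Nat.card ↥(N ⊓ B) = orderOf ρ / n := by
    rw [hNB, Nat.card_zpowers, orderOf_pow, Nat.gcd_eq_right hnr]
  have key1 : n * Nat.card ↥(N ⊓ B) = Nat.card ↥B := by
    rw [cardNB, cardB, Nat.mul_div_cancel' hnr]
  have cardNBpos : 0 < Nat.card ↥(N ⊓ B) := Nat.card_pos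
  have rel1 : n = N.relIndex B :=
    Nat.eq_of_mul_eq_mul_right cardNBpos (key1.trans (relindex_mul_card_inf N B).symm)
  have rel2 := relindex_mul_card_inf N S
  have relSpos : N.relIndex S ≠ 0 := by
    intro h0
    rw [h0, zero_mul] at rel2
    exact absurd rel2.symm (Nat.card_pos (α := ↥S)).ne'
  have mono : N.relIndex B ≤ N.relIndex S :=
    Subgroup.relIndex_le_of_le_right hB relSpos
  -- card (N ⊓ S) = p ^ v_p (card N)
  have cardR' : Nat.card ↥R' = p ^ (Nat.card ↥N).factorization p := by
    rw [hR'def, ← Nat.card_congr (Subgroup.equivMapOfInjective _ _ N.subtype_injective).toEquiv]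
    exact R.card_eq_multiplicity
  have hR'NS : R' ≤ N ⊓ S := le_inf (Subgroup.map_subtype_le _) hRS
  have pNS : IsPGroup p ↥(N ⊓ S) := S.isPGroup'.to_inf_right
  obtain ⟨k, hk⟩ := IsPGroup.iff_card.mp pNS
  have cardNne : Nat.card ↥N ≠ 0 := (Nat.card_pos (α := ↥N)).ne'
  have hkle : k ≤ (Nat.card ↥N).factorization p :=
    (Nat.Prime.pow_dvd_iff_le_factorization hp cardNne).mp
      (hk ▸ Subgroup.card_dvd_of_le inf_le_left)
  have cardNS : Nat.card ↥(N ⊓ S) = p ^ (Nat.card ↥N).factorization p := by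
    refine Nat.dvd_antisymm ?_ ?_
    · rw [hk]; exact pow_dvd_pow p hkle
    · rw [← cardR']; exact Subgroup.card_dvd_of_le hR'NS
  have cardS : Nat.card ↥(S : Subgroup H) = p ^ (Nat.card H).factorization p :=
    S.card_eq_multiplicity
  -- n is a power of p
  obtain ⟨a, ha⟩ := IsPGroup.iff_card.mp (IsPGroup.to_le S.isPGroup' hB)
  have hnB : n ∣ Nat.card ↥B := ⟨_, key1.symm⟩
  obtain ⟨b, hble, hb⟩ := (Nat.dvd_prime_pow hp).mp (ha ▸ hnB)
  -- relindex N S is a power of p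
  have hrelS_dvd : N.relIndex S ∣ Nat.card ↥(S : Subgroup H) := ⟨_, rel2.symm⟩
  obtain ⟨c, hcle, hc⟩ := (Nat.dvd_prime_pow hp).mp (cardS ▸ hrelS_dvd)
  have hbc : b ≤ c := by
    have : (p : ℕ) ^ b ≤ p ^ c := by
      rw [← hb, ← hc]
      exact rel1 ▸ mono
    exact (Nat.pow_le_pow_iff_right hp.one_lt).mp this
  have hcv : c + (Nat.card ↥N).factorization p = (Nat.card H).factorization p := by
    have h2 : (p : ℕ) ^ (c + (Nat.card ↥N).factorization p) =
        p ^ (Nat.card H).factorization p := by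
      rw [pow_add, ← hc, ← cardNS, ← cardS]
      exact rel2
    exact Nat.pow_right_injective hp.two_le h2
  have hidx : N.index * Nat.card ↥N = Nat.card H := Subgroup.index_mul_card N
  have hHne : (Nat.card H) ≠ 0 := (Nat.card_pos (α := H)).ne'
  have hidxne : N.index ≠ 0 := by
    intro h0
    rw [h0, zero_mul] at hidx
    exact hHne hidx.symm
  have hfac : (N.index).factorization p + (Nat.card ↥N).factorization p
      = (Nat.card H).factorization p := by
    have := Nat.factorization_mul hidxne cardNne
    have h2 := congrArg (fun f => f p) this
    simp only [Finsupp.add_apply] at h2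
    rw [← h2, hidx]
  have hgoal : (nOrd (N : Set H) ρ).factorization p = b := by
    rw [← hndef, hb, hp.factorization_pow]
    simp
  rw [hgoal]
  omega

lemma inv_conj_pow (a b : G) (k : ℕ) : (a⁻¹ * b * a) ^ k = a⁻¹ * b ^ k * a := by
  simpa using conj_pow (a := a⁻¹) (b := b) (i := k)

lemma nOrd_conj_mem [Finite G] (M : Subgroup G) (w h : G) (hh : h ∈ M) :
    nOrd (M : Set G) (h⁻¹ * w * h) = nOrd (M : Set G) w := by
  unfold nOrd
  congr 1
  ext k
  simp only [Set.mem_setOf_eq, inv_conj_pow, SetLike.mem_coe]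
  constructor
  · rintro ⟨hk, hmem⟩
    refine ⟨hk, ?_⟩
    have := M.mul_mem (M.mul_mem hh hmem) (M.inv_mem hh)
    simpa [mul_assoc] using this
  · rintro ⟨hk, hmem⟩
    exact ⟨hk, M.mul_mem (M.mul_mem (M.inv_mem hh) hmem) hh⟩

lemma nOrd_subgroupOf (N M : Subgroup G) (w : ↥M) :
    nOrd ((N.subgroupOf M : Subgroup ↥M) : Set ↥M) w = nOrd (N : Set G) (w : G) := by
  unfold nOrd
  have : {k : ℕ | 0 < k ∧ w ^ k ∈ ((N.subgroupOf M : Subgroup ↥M) : Set ↥M)}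
      = {k : ℕ | 0 < k ∧ (w : G) ^ k ∈ (N : Set G)} := by
    ext k
    simp [Subgroup.mem_subgroupOf]
  rw [this]

end Helpers

theorem stmt4 {G : Type*} [Group G] [Fintype G] (N M : Subgroup G) (hNM : N ≤ M) (x : G)
    (p : ℕ) (hp : p.Prime) (α v : ℕ) (hv : ¬ p ∣ v)
    (h : gOrd (N : Set G) (x ^ gOrd (M : Set G) x) = p ^ α * v) :
    p ^ α ∣ N.relIndex M := by
  classical
  set m := gOrd (M : Set G) x with hm
  have hdvd_all : ∀ g : G, p ^ α ∣ nOrd (N : Set G) (g⁻¹ * x ^ m * g) := by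
    intro g
    have h1 : p ^ α ∣ gOrd (N : Set G) (x ^ m) := h ▸ dvd_mul_right _ _
    exact h1.trans (Finset.gcd_dvd (Finset.mem_univ g))
  have hm_dvd : ∀ g : G, m ∣ nOrd (M : Set G) (g⁻¹ * x * g) := fun g =>
    Finset.gcd_dvd (Finset.mem_univ g)
  have hmpos : 0 < m := by
    rcases Nat.eq_zero_or_pos m with h0 | h0
    · exfalso
      have := Finset.gcd_eq_zero_iff.mp h0 1 (Finset.mem_univ 1)
      exact (nOrd_spec M (1⁻¹ * x * 1)).1.ne' this
    · exact h0
  -- choose g₀ with minimal p-valuation of nOrd M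
  have hex : ∃ g₀ : G, (nOrd (M : Set G) (g₀⁻¹ * x * g₀)).factorization p
      ≤ m.factorization p := by
    by_contra hcon
    push_neg at hcon
    have hdvd : p ^ (m.factorization p + 1) ∣ m := by
      apply Finset.dvd_gcd
      intro g _
      exact (Nat.Prime.pow_dvd_iff_le_factorization hp (nOrd_spec M _).1.ne').mpr (hcon g)
    have := (Nat.Prime.pow_dvd_iff_le_factorization hp hmpos.ne').mp hdvd
    omega
  obtain ⟨g₀, hg₀⟩ := hex
  set w₀ := g₀⁻¹ * x * g₀ with hw₀
  set t := nOrd (M : Set G) w₀ with htdef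
  have htpos : 0 < t := (nOrd_spec M w₀).1
  have htm : m ∣ t := hm_dvd g₀
  have hvmt : m.factorization p ≤ t.factorization p :=
    (Nat.Prime.pow_dvd_iff_le_factorization hp htpos.ne').mp
      ((Nat.ordProj_dvd m p).trans htm)
  have htfac : t.factorization p = m.factorization p := le_antisymm hg₀ hvmt
  have huM : w₀ ^ t ∈ M := (nOrd_spec M w₀).2
  set u := w₀ ^ t with hudef
  set r := orderOf u with hrdef
  have hrpos : 0 < r := orderOf_pos u
  set q := ordCompl[p] r with hqdef
  have hq : ¬ p ∣ q := Nat.not_dvd_ordCompl hp hrpos.ne'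
  have hqr : q ∣ r := Nat.ordCompl_dvd r p
  have hqpos : 0 < q := Nat.ordCompl_pos p hrpos.ne'
  set π := u ^ q with hπdef
  have hπM : π ∈ M := pow_mem huM q
  have hordπ : orderOf π = p ^ r.factorization p := by
    rw [hπdef, orderOf_pow, ← hrdef, Nat.gcd_eq_right hqr]
    exact Nat.div_eq_of_eq_mul_left hqpos (Nat.ordProj_mul_ordCompl_eq_self r p).symm
  -- apply the Sylow step inside M
  set π' : ↥M := ⟨π, hπM⟩ with hπ'def
  have hπ'ord : orderOf π' = p ^ r.factorization p := by
    rw [Subgroup.orderOf_mk]; exact hordπ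
  have hπ'pgroup : IsPGroup p (Subgroup.zpowers π') :=
    IsPGroup.of_card (by rw [Nat.card_zpowers, hπ'ord])
  obtain ⟨h', hh'⟩ := sylow_step (N.subgroupOf M) p hp π' hπ'pgroup
  set hG := (h' : G) with hhG
  have hhM : hG ∈ M := h'.2
  have hcoe : ((h'⁻¹ * π' * h' : ↥M) : G) = hG⁻¹ * π * hG := by
    push_cast
    rfl
  have hh2 : (nOrd (N : Set G) (hG⁻¹ * π * hG)).factorization p
      ≤ (N.relIndex M).factorization p := by
    have := hh'
    rwa [nOrd_subgroupOf, hcoe] at this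
  -- the conjugate w and related quantities
  set w := hG⁻¹ * w₀ * hG with hwdef
  have htw : nOrd (M : Set G) w = t := nOrd_conj_mem M w₀ hG hhM
  set c := nOrd (N : Set G) w with hcdef
  have hcpos : 0 < c := (nOrd_spec N w).1
  set e := nOrd (N : Set G) (hG⁻¹ * u * hG) with hedef
  have hepos : 0 < e := (nOrd_spec N _).1
  have hconj : ∀ k : ℕ, w ^ (t * k) = (hG⁻¹ * u * hG) ^ k := by
    intro k
    calc w ^ (t * k) = hG⁻¹ * w₀ ^ (t * k) * hG := by rw [hwdef, inv_conj_pow]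
      _ = hG⁻¹ * u ^ k * hG := by rw [pow_mul, ← hudef]
      _ = (hG⁻¹ * u * hG) ^ k := (inv_conj_pow hG u k).symm
  have hce : c = t * e := by
    refine Nat.dvd_antisymm ?_ ?_
    · refine (nOrd_dvd_iff N w _).mpr ?_
      rw [hconj e]
      exact (nOrd_spec N _).2
    · have htc : t ∣ c := by
        have := (nOrd_dvd_iff M w c).mpr (hNM (nOrd_spec N w).2)
        rwa [htw] at this
      obtain ⟨j, hj⟩ := htc
      have hjN : (hG⁻¹ * u * hG) ^ j ∈ N := by
        rw [← hconj j, ← hj]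
        exact (nOrd_spec N w).2
      have hej : e ∣ j := (nOrd_dvd_iff N _ j).mpr hjN
      rw [hj]
      exact mul_dvd_mul_left t hej
  set n' := nOrd (N : Set G) (hG⁻¹ * π * hG) with hn'def
  have hn'pos : 0 < n' := (nOrd_spec N _).1
  have heqn : e ∣ q * n' := by
    refine (nOrd_dvd_iff N _ _).mpr ?_
    rw [pow_mul]
    have hππ : (hG⁻¹ * u * hG) ^ q = hG⁻¹ * π * hG := by
      rw [inv_conj_pow, hπdef]
    rw [hππ]
    exact (nOrd_spec N _).2
  -- the element z = g⁻¹ (x^m) g = w^m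
  set g := g₀ * hG with hgdef
  have hwg : w = g⁻¹ * x * g := by
    rw [hwdef, hw₀, hgdef]
    group
  have hzeq : g⁻¹ * x ^ m * g = w ^ m := by
    rw [hwg, inv_conj_pow]
  set nz := nOrd (N : Set G) (w ^ m) with hnzdef
  have hnzpos : 0 < nz := (nOrd_spec N _).1
  have hα : α ≤ nz.factorization p := by
    have h2 := hdvd_all g
    rw [hzeq] at h2
    exact (Nat.Prime.pow_dvd_iff_le_factorization hp hnzpos.ne').mp h2
  set d := Nat.gcd c m with hddef
  have hdc : d ∣ c := Nat.gcd_dvd_left c m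
  have hdm : d ∣ m := Nat.gcd_dvd_right c m
  have hdpos : 0 < d := Nat.gcd_pos_of_pos_left m hcpos
  have hnz_dvd : nz ∣ c / d := by
    refine (nOrd_dvd_iff N _ _).mpr ?_
    rw [← pow_mul]
    refine (nOrd_dvd_iff N w _).mp ?_
    obtain ⟨m', hm'⟩ := hdm
    have hh3 : m * (c / d) = m' * c := by
      rw [hm', mul_comm d m', mul_assoc, Nat.mul_div_cancel' hdc]
    rw [hh3]
    exact dvd_mul_left c m'
  have hcd_pos : 0 < c / d := Nat.div_pos (Nat.le_of_dvd hcpos hdc) hdpos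
  have hA : (c / d).factorization p + d.factorization p = c.factorization p := by
    have hmul : (c / d) * d = c := Nat.div_mul_cancel hdc
    have h2 := congrArg (fun f => f p) (Nat.factorization_mul hcd_pos.ne' hdpos.ne')
    simp only [Finsupp.add_apply] at h2
    rw [← h2, hmul]
  have hvmc : m.factorization p ≤ c.factorization p :=
    (Nat.Prime.pow_dvd_iff_le_factorization hp hcpos.ne').mp
      ((Nat.ordProj_dvd m p).trans (htm.trans ⟨e, hce⟩))
  have hvd : d.factorization p = m.factorization p := by
    have h2 := congrArg (fun f => f p) (Nat.factorization_gcd hcpos.ne' hmpos.ne')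
    simp only [Finsupp.inf_apply] at h2
    rw [hddef, h2]
    exact min_eq_right hvmc
  have hvc : c.factorization p = t.factorization p + e.factorization p := by
    have h2 := congrArg (fun f => f p) (Nat.factorization_mul htpos.ne' hepos.ne')
    simp only [Finsupp.add_apply] at h2
    rw [hce, h2]
  have hve : e.factorization p ≤ n'.factorization p := by
    have h1 : e.factorization p ≤ (q * n').factorization p :=
      (Nat.Prime.pow_dvd_iff_le_factorization hp (mul_pos hqpos hn'pos).ne').mp
        ((Nat.ordProj_dvd e p).trans heqn)
    have h2 := congrArg (fun f => f p) (Nat.factorization_mul hqpos.ne' hn'pos.ne')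
    simp only [Finsupp.add_apply] at h2
    have hq0 : q.factorization p = 0 := Nat.factorization_eq_zero_of_not_dvd hq
    omega
  have hnzle : nz.factorization p ≤ (c / d).factorization p :=
    (Nat.Prime.pow_dvd_iff_le_factorization hp hcd_pos.ne').mp
      ((Nat.ordProj_dvd nz p).trans hnz_dvd)
  have hrelne : N.relIndex M ≠ 0 :=
    show (N.subgroupOf M).index ≠ 0 from Subgroup.index_ne_zero_of_finite
  refine (Nat.Prime.pow_dvd_iff_le_factorization hp hrelne).mpr ?_
  omega
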